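/- For λ with λ(λ+1)≠0 and λ≠-1/2, the power divergence D_λ between Lap(w₁,b) and Lap(w₂,b) on ℝ equals (1/(λ(λ+1)))·((1/(2b))·[e^{λ|v|/b}(b + b/(2λ+1)) + e^{-(λ+1)|v|/b}(b - b/(2λ+1))] - 1), where v=w₁-w₂. -/

import Mathlib

open MeasureTheory Set

/-- Density of the Laplace distribution `Lap(w, b)` on `ℝ`. -/
noncomputable def laplacePDF (w b : ℝ) : ℝ → ℝ :=
  fun x => (1 / (2 * b)) * Real.exp (-|x - w| / b)

lemma integrableOn_exp_neg_mul_Ioi (a : ℝ) {c : ℝ} (hc : 0 < c) :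
    IntegrableOn (fun x : ℝ => Real.exp (-(c * x))) (Ioi a) := by
  simpa [neg_mul] using exp_neg_integrableOn_Ioi a hc

lemma integral_exp_neg_mul_Ioi (a : ℝ) {c : ℝ} (hc : 0 < c) :
    ∫ x in Ioi a, Real.exp (-(c * x)) = Real.exp (-(c * a)) / c := by
  have h := MeasureTheory.integral_comp_mul_left_Ioi (fun y => Real.exp (-y)) a hc
  simp only [smul_eq_mul] at h
  rw [h, integral_exp_neg_Ioi]
  rw [div_eq_inv_mul]

lemma integrableOn_exp_mul_Iic' (a : ℝ) {c : ℝ} (hc : 0 < c) :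
    IntegrableOn (fun x : ℝ => Real.exp (c * x)) (Iic a) := by
  have A : MeasurableEmbedding (fun x : ℝ => -x) :=
    (Homeomorph.neg ℝ).isClosedEmbedding.measurableEmbedding
  have h : IntegrableOn (fun x : ℝ => Real.exp (-(c * x))) (Ioi (-a)) :=
    integrableOn_exp_neg_mul_Ioi _ hc
  rw [← Measure.map_neg_eq_self (volume : Measure ℝ), A.integrableOn_map_iff] at h
  have hpre : ((fun x : ℝ => -x) ⁻¹' Ioi (-a)) = Iio a := by
    ext x; simp
  rw [hpre] at h
  rw [integrableOn_Iic_iff_integrableOn_Iio]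
  simpa [Function.comp_def, mul_neg, neg_neg] using h

lemma integral_exp_mul_Iic' (a : ℝ) {c : ℝ} (hc : 0 < c) :
    ∫ x in Iic a, Real.exp (c * x) = Real.exp (c * a) / c := by
  have h := integral_comp_neg_Iic a (fun x : ℝ => Real.exp (-(c * x)))
  simp only [mul_neg, neg_neg] at h
  rw [h, integral_exp_neg_mul_Ioi _ hc, mul_neg, neg_neg]

lemma key_integral (b : ℝ) (hb : 0 < b) (l : ℝ) (hl2 : 2 * l + 1 ≠ 0)
    (v : ℝ) (hv : 0 ≤ v) :
    ∫ x : ℝ, Real.exp ((-(l + 1) * |x - v| + l * |x|) / b)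
      = Real.exp (l * v / b) * (b + b / (2 * l + 1)) +
        Real.exp (-(l + 1) * v / b) * (b - b / (2 * l + 1)) := by
  set f : ℝ → ℝ := fun x => Real.exp ((-(l + 1) * |x - v| + l * |x|) / b) with hf
  have hbne : b ≠ 0 := hb.ne'
  have hbinv : 0 < 1 / b := by positivity
  have h1 : ∀ x ∈ Iic (0 : ℝ), f x = Real.exp (-(l + 1) * v / b) * Real.exp (1 / b * x) := by
    intro x hx
    simp only [mem_Iic] at hx
    rw [hf]
    simp only
    rw [abs_of_nonpos (by linarith), abs_of_nonpos hx, ← Real.exp_add]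
    congr 1
    field_simp
    ring
  have h2 : ∀ x ∈ Ioc (0 : ℝ) v,
      f x = Real.exp (-(l + 1) * v / b) * Real.exp ((2 * l + 1) / b * x) := by
    intro x hx
    simp only [mem_Ioc] at hx
    rw [hf]
    simp only
    rw [abs_of_nonpos (by linarith [hx.2]), abs_of_nonneg hx.1.le, ← Real.exp_add]
    congr 1
    field_simp
    ring
  have h3 : ∀ x ∈ Ioi v, f x = Real.exp ((l + 1) * v / b) * Real.exp (-(1 / b * x)) := by
    intro x hx
    simp only [mem_Ioi] at hx
    rw [hf]
    simp only
    rw [abs_of_nonneg (by linarith), abs_of_nonneg (by linarith), ← Real.exp_add]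
    congr 1
    field_simp
    ring
  have i1 : IntegrableOn f (Iic 0) :=
    IntegrableOn.congr_fun ((integrableOn_exp_mul_Iic' 0 hbinv).const_mul
      (Real.exp (-(l + 1) * v / b))) (fun x hx => (h1 x hx).symm) measurableSet_Iic
  have i2 : IntegrableOn f (Ioc 0 v) := by
    apply Continuous.integrableOn_Ioc
    apply Real.continuous_exp.comp
    fun_prop
  have i3 : IntegrableOn f (Ioi v) :=
    IntegrableOn.congr_fun ((integrableOn_exp_neg_mul_Ioi v hbinv).const_mul
      (Real.exp ((l + 1) * v / b))) (fun x hx => (h3 x hx).symm) measurableSet_Ioi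
  have i23 : IntegrableOn f (Ioi 0) := by
    rw [← Ioc_union_Ioi_eq_Ioi hv]
    exact i2.union i3
  have split1 : (∫ x in Iic (0:ℝ), f x) + (∫ x in Ioi (0:ℝ), f x) = ∫ x : ℝ, f x :=
    intervalIntegral.integral_Iic_add_Ioi i1 i23
  have split2 : (∫ x in Ioi (0:ℝ), f x)
      = (∫ x in Ioc (0:ℝ) v, f x) + (∫ x in Ioi v, f x) := by
    rw [← Ioc_union_Ioi_eq_Ioi hv]
    exact setIntegral_union (Ioc_disjoint_Ioi le_rfl) measurableSet_Ioi i2 i3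
  have e1 : ∫ x in Iic (0:ℝ), f x = Real.exp (-(l + 1) * v / b) * b := by
    rw [setIntegral_congr_fun measurableSet_Iic h1, integral_const_mul,
      integral_exp_mul_Iic' 0 hbinv]
    rw [mul_zero, Real.exp_zero]
    field_simp
  have e3 : ∫ x in Ioi v, f x = Real.exp (l * v / b) * b := by
    rw [setIntegral_congr_fun measurableSet_Ioi h3, integral_const_mul,
      integral_exp_neg_mul_Ioi v hbinv]
    have hdb : Real.exp (-(1 / b * v)) / (1 / b) = Real.exp (-(1 / b * v)) * b := by
      field_simp
    rw [hdb, ← mul_assoc, ← Real.exp_add]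
    have harg : (l + 1) * v / b + -(1 / b * v) = l * v / b := by
      field_simp
      ring
    rw [harg]
  have e2 : ∫ x in Ioc (0:ℝ) v, f x
      = Real.exp (-(l + 1) * v / b) *
        ((Real.exp ((2 * l + 1) / b * v) - 1) * (b / (2 * l + 1))) := by
    rw [setIntegral_congr_fun measurableSet_Ioc h2, integral_const_mul]
    congr 1
    have hk : (2 * l + 1) / b ≠ 0 := div_ne_zero hl2 hbne
    rw [← intervalIntegral.integral_of_le hv]
    have hcm : ∀ x : ℝ, Real.exp ((2 * l + 1) / b * x) = Real.exp (x * ((2 * l + 1) / b)) := by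
      intro x; rw [mul_comm]
    simp_rw [hcm]
    rw [intervalIntegral.integral_comp_mul_right Real.exp hk]
    rw [zero_mul, integral_exp, Real.exp_zero, smul_eq_mul]
    rw [mul_comm v ((2 * l + 1) / b)]
    field_simp
  rw [← split1, split2, e1, e2, e3]
  have exps : Real.exp (-(l + 1) * v / b) * Real.exp ((2 * l + 1) / b * v)
      = Real.exp (l * v / b) := by
    rw [← Real.exp_add]
    congr 1
    field_simp
    ring
  linear_combination (b / (2 * l + 1)) * exps

lemma key_integral' (b : ℝ) (hb : 0 < b) (l : ℝ) (hl2 : 2 * l + 1 ≠ 0) (v : ℝ) :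
    ∫ x : ℝ, Real.exp ((-(l + 1) * |x - v| + l * |x|) / b)
      = Real.exp (l * |v| / b) * (b + b / (2 * l + 1)) +
        Real.exp (-(l + 1) * |v| / b) * (b - b / (2 * l + 1)) := by
  rcases le_or_gt 0 v with hv | hv
  · rw [abs_of_nonneg hv]
    exact key_integral b hb l hl2 v hv
  · rw [abs_of_neg hv]
    have hswap : (∫ x : ℝ, Real.exp ((-(l + 1) * |x - v| + l * |x|) / b))
        = ∫ x : ℝ, Real.exp ((-(l + 1) * |x - (-v)| + l * |x|) / b) := by
      rw [← integral_neg_eq_self (fun x : ℝ =>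
          Real.exp ((-(l + 1) * |x - (-v)| + l * |x|) / b)) (volume : Measure ℝ)]
      congr 1
      funext x
      rw [show (-x) - (-v) = -(x - v) by ring, abs_neg, abs_neg]
    rw [hswap, key_integral b hb l hl2 (-v) (by linarith)]

/-- For `λ(λ+1) ≠ 0` and `λ ≠ -1/2`, the power divergence `D_λ` between `Lap(w₁,b)` and
`Lap(w₂,b)` equals
`(1/(λ(λ+1))) ((1/(2b)) [e^{λ|v|/b}(b + b/(2λ+1)) + e^{-(λ+1)|v|/b}(b - b/(2λ+1))] - 1)`,
where `v = w₁ - w₂`. -/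
theorem power_divergence_laplace (b : ℝ) (hb : 0 < b)
    (l : ℝ) (hl : l * (l + 1) ≠ 0) (hl2 : l ≠ -1 / 2) (w₁ w₂ : ℝ) :
    (1 / (l * (l + 1))) *
        ((∫ x : ℝ, (laplacePDF w₁ b x) ^ (l + 1) / (laplacePDF w₂ b x) ^ l) - 1) =
      (1 / (l * (l + 1))) *
        ((1 / (2 * b)) *
            (Real.exp (l * |w₁ - w₂| / b) * (b + b / (2 * l + 1)) +
              Real.exp (-(l + 1) * |w₁ - w₂| / b) * (b - b / (2 * l + 1))) - 1) := by
  have hbne : b ≠ 0 := hb.ne'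
  have hc : (0:ℝ) < 1 / (2 * b) := by positivity
  have hl2' : 2 * l + 1 ≠ 0 := by
    intro h; apply hl2; linarith
  have hint : ∀ x : ℝ, (laplacePDF w₁ b x) ^ (l + 1) / (laplacePDF w₂ b x) ^ l
      = (1 / (2 * b)) * Real.exp ((-(l + 1) * |x - w₁| + l * |x - w₂|) / b) := by
    intro x
    unfold laplacePDF
    rw [Real.mul_rpow hc.le (Real.exp_pos _).le, Real.mul_rpow hc.le (Real.exp_pos _).le]
    rw [← Real.exp_mul, ← Real.exp_mul]
    rw [mul_div_mul_comm, ← Real.rpow_sub hc, ← Real.exp_sub]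
    rw [show l + 1 - l = 1 by ring, Real.rpow_one]
    congr 1
    field_simp
    ring
  simp_rw [hint]
  rw [integral_const_mul]
  have tr : ∫ x : ℝ, Real.exp ((-(l + 1) * |x - w₁| + l * |x - w₂|) / b)
      = ∫ x : ℝ, Real.exp ((-(l + 1) * |x - (w₁ - w₂)| + l * |x|) / b) := by
    rw [← integral_sub_right_eq_self (fun x : ℝ =>
        Real.exp ((-(l + 1) * |x - (w₁ - w₂)| + l * |x|) / b)) w₂]
    congr 1
    funext x
    congr 3
    · congr 1; ring
  rw [tr, key_integral' b hb l hl2' (w₁ - w₂)]
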